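/- Fix vectors p₁,…,p₅, u₁,…,u₅ ∈ ℝ³ and let R be a 3 × 3 real matrix with Rᵀ · R = 1 and det R = 1 (a rotation). If (w, λ₁, λ₂, ρ₁,…,ρ₅, a, b, c, d, e) is a solution of the IOD system for the data (pᵢ, uᵢ), then (R·w, λ₁, λ₂, ρ₁,…,ρ₅, a, b, c, d, e) is a solution of the IOD system for the rotated data (R·pᵢ, R·uᵢ). -/

import Mathlib

/-- The cross product on `EuclideanSpace ℝ (Fin 3)`. -/
noncomputable def cross3 (x y : EuclideanSpace ℝ (Fin 3)) : EuclideanSpace ℝ (Fin 3) :=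
  (EuclideanSpace.equiv (Fin 3) ℝ).symm
    ![x 1 * y 2 - x 2 * y 1, x 2 * y 0 - x 0 * y 2, x 0 * y 1 - x 1 * y 0]

/-- The 15-equation polynomial system for angles-only initial orbit determination:
with `v₂ = λ₂ (w × u₁)`, `v₁ = λ₁ (v₂ × w)`, `rᵢ = pᵢ + ρᵢ uᵢ`, `xᵢ = ⟨rᵢ, v₁⟩`,
`yᵢ = ⟨rᵢ, v₂⟩`, the constraints are: `w`, `v₁`, `v₂` are unit vectors, each `rᵢ`
lies in the orbital plane, the five planar points lie on the normalized conic with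
coefficients `(a,b,c,d,e)`, and the two focal polynomials vanish. -/
noncomputable def IsIODSolution (p u : Fin 5 → EuclideanSpace ℝ (Fin 3))
    (w : EuclideanSpace ℝ (Fin 3)) (l₁ l₂ : ℝ) (ρ : Fin 5 → ℝ)
    (a b c d e : ℝ) : Prop :=
  let v₂ : EuclideanSpace ℝ (Fin 3) := l₂ • cross3 w (u 0)
  let v₁ : EuclideanSpace ℝ (Fin 3) := l₁ • cross3 v₂ w
  let r : Fin 5 → EuclideanSpace ℝ (Fin 3) := fun i => p i + ρ i • u i
  let x : Fin 5 → ℝ := fun i => (inner ℝ (r i) v₁ : ℝ)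
  let y : Fin 5 → ℝ := fun i => (inner ℝ (r i) v₂ : ℝ)
  (inner ℝ w w : ℝ) = 1 ∧ (inner ℝ v₁ v₁ : ℝ) = 1 ∧ (inner ℝ v₂ v₂ : ℝ) = 1 ∧
  (∀ i, (inner ℝ (r i) w : ℝ) = 0) ∧
  (∀ i, a * x i ^ 2 + b * y i ^ 2 + c * x i * y i + d * x i + e * y i + 1 = 0) ∧
  e ^ 2 - 4 * b - d ^ 2 + 4 * a = 0 ∧
  d * e - 2 * c = 0

/-- Action of a 3×3 matrix on `EuclideanSpace ℝ (Fin 3)` by matrix–vector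
multiplication. -/
noncomputable def matAct (R : Matrix (Fin 3) (Fin 3) ℝ)
    (v : EuclideanSpace ℝ (Fin 3)) : EuclideanSpace ℝ (Fin 3) :=
  (EuclideanSpace.equiv (Fin 3) ℝ).symm (R.mulVec (EuclideanSpace.equiv (Fin 3) ℝ v))

lemma matAct_apply (R : Matrix (Fin 3) (Fin 3) ℝ) (v : EuclideanSpace ℝ (Fin 3)) (i : Fin 3) :
    matAct R v i = R i 0 * v 0 + R i 1 * v 1 + R i 2 * v 2 := by
  simp [matAct, Matrix.mulVec, dotProduct, Fin.sum_univ_three]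

lemma cross3_apply (x y : EuclideanSpace ℝ (Fin 3)) :
    cross3 x y 0 = x 1 * y 2 - x 2 * y 1 ∧ cross3 x y 1 = x 2 * y 0 - x 0 * y 2 ∧
    cross3 x y 2 = x 0 * y 1 - x 1 * y 0 := by
  refine ⟨?_, ?_, ?_⟩ <;> simp [cross3]

lemma inner_matAct (R : Matrix (Fin 3) (Fin 3) ℝ) (hR : R.transpose * R = 1)
    (x y : EuclideanSpace ℝ (Fin 3)) :
    (inner ℝ (matAct R x) (matAct R y) : ℝ) = inner ℝ x y := by
  have h := fun i j => congrFun (congrFun hR i) j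
  simp only [Matrix.mul_apply, Matrix.transpose_apply, Fin.sum_univ_three] at h
  have h00 := h 0 0; have h01 := h 0 1; have h02 := h 0 2
  have h11 := h 1 1; have h12 := h 1 2; have h22 := h 2 2
  simp [Matrix.one_apply] at h00 h01 h02 h11 h12 h22
  simp only [PiLp.inner_apply, RCLike.inner_apply, conj_trivial, Fin.sum_univ_three,
    matAct_apply]
  linear_combination (x 0 * y 0) * h00 + (x 1 * y 1) * h11 + (x 2 * y 2) * h22 +
    (x 0 * y 1 + x 1 * y 0) * h01 + (x 0 * y 2 + x 2 * y 0) * h02 +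
    (x 1 * y 2 + x 2 * y 1) * h12

lemma cross3_matAct (R : Matrix (Fin 3) (Fin 3) ℝ) (hR : R.transpose * R = 1)
    (hdet : R.det = 1) (x y : EuclideanSpace ℝ (Fin 3)) :
    cross3 (matAct R x) (matAct R y) = matAct R (cross3 x y) := by
  have hRR : R * R.transpose = 1 := mul_eq_one_comm.mp hR
  have hadj : R.adjugate = R.transpose := by
    have := Matrix.mul_adjugate R
    rw [hdet, one_smul] at this
    calc R.adjugate = 1 * R.adjugate := (one_mul _).symm
      _ = (R.transpose * R) * R.adjugate := by rw [hR]
      _ = R.transpose * (R * R.adjugate) := by rw [Matrix.mul_assoc]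
      _ = R.transpose := by rw [this, mul_one]
  have hE := fun i j => congrFun (congrFun ((Matrix.adjugate_fin_three R).symm.trans hadj) i) j
  have e00 := hE 0 0; have e01 := hE 0 1; have e02 := hE 0 2
  have e10 := hE 1 0; have e11 := hE 1 1; have e12 := hE 1 2
  have e20 := hE 2 0; have e21 := hE 2 1; have e22 := hE 2 2
  simp [Matrix.transpose_apply] at e00 e01 e02 e10 e11 e12 e20 e21 e22
  ext i
  fin_cases i <;> simp [cross3, matAct_apply]
  · linear_combination (x 1 * y 2 - x 2 * y 1) * e00 + (x 2 * y 0 - x 0 * y 2) * e10 +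
      (x 0 * y 1 - x 1 * y 0) * e20
  · linear_combination (x 1 * y 2 - x 2 * y 1) * e01 + (x 2 * y 0 - x 0 * y 2) * e11 +
      (x 0 * y 1 - x 1 * y 0) * e21
  · linear_combination (x 1 * y 2 - x 2 * y 1) * e02 + (x 2 * y 0 - x 0 * y 2) * e12 +
      (x 0 * y 1 - x 1 * y 0) * e22

lemma matAct_smul (R : Matrix (Fin 3) (Fin 3) ℝ) (s : ℝ) (v : EuclideanSpace ℝ (Fin 3)) :
    matAct R (s • v) = s • matAct R v := by
  ext i; simp [matAct_apply]; ring

lemma matAct_add (R : Matrix (Fin 3) (Fin 3) ℝ) (v w : EuclideanSpace ℝ (Fin 3)) :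
    matAct R (v + w) = matAct R v + matAct R w := by
  ext i; simp [matAct_apply]; ring

/-- Rotation equivariance of the IOD system: rotating the data `(pᵢ, uᵢ)` and `w`
by `R ∈ SO(3)` takes solutions to solutions. -/
theorem iod_rotation_equivariance (p u : Fin 5 → EuclideanSpace ℝ (Fin 3))
    (R : Matrix (Fin 3) (Fin 3) ℝ) (hR : R.transpose * R = 1) (hdet : R.det = 1)
    (w : EuclideanSpace ℝ (Fin 3)) (l₁ l₂ : ℝ) (ρ : Fin 5 → ℝ) (a b c d e : ℝ)
    (h : IsIODSolution p u w l₁ l₂ ρ a b c d e) :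
    IsIODSolution (fun i => matAct R (p i)) (fun i => matAct R (u i))
      (matAct R w) l₁ l₂ ρ a b c d e := by
  simp only [IsIODSolution] at h ⊢
  obtain ⟨hw, hv1, hv2, hr, hc, hf1, hf2⟩ := h
  have hv2' : l₂ • cross3 (matAct R w) (matAct R (u 0)) =
      matAct R (l₂ • cross3 w (u 0)) := by
    rw [cross3_matAct R hR hdet, matAct_smul]
  have hv1' : l₁ • cross3 (l₂ • cross3 (matAct R w) (matAct R (u 0))) (matAct R w) =
      matAct R (l₁ • cross3 (l₂ • cross3 w (u 0)) w) := by
    rw [hv2', cross3_matAct R hR hdet, matAct_smul]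
  have hv1'' : l₁ • cross3 (matAct R (l₂ • cross3 w (u 0))) (matAct R w) =
      matAct R (l₁ • cross3 (l₂ • cross3 w (u 0)) w) := by
    rw [cross3_matAct R hR hdet, matAct_smul]
  have hr' : ∀ i : Fin 5, matAct R (p i) + ρ i • matAct R (u i) =
      matAct R (p i + ρ i • u i) := fun i => by rw [matAct_add, matAct_smul]
  refine ⟨?_, ?_, ?_, ?_, ?_, hf1, hf2⟩
  · rw [inner_matAct R hR]; exact hw
  · rw [hv1', inner_matAct R hR]; exact hv1
  · rw [hv2', inner_matAct R hR]; exact hv2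
  · intro i; rw [hr' i, inner_matAct R hR]; exact hr i
  · intro i; simp only [hv1', hv2', hv1'', hr' i, inner_matAct R hR]; exact hc i
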